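/- For every n >= 1, the coefficient a_{n,k} given by a_{n,k} = (1/k!) * sum over r from 0 to k of ((-1)^r / 2^r) * binomial(k,r) * sum over j from 0 to k-r of ((-1)^j / 2^j) * binomial(k-r, j) * (r-j)^(2n) is an integer for each k = 1, ..., n. -/

import Mathlib

open Finset

private lemma sub_mul_choose' (n k : ℕ) : (n - k) * n.choose k = n * (n-1).choose k := by
  cases n with
  | zero => simp
  | succ m =>
    simp only [Nat.succ_sub_one]
    rw [mul_comm, ← Nat.choose_succ_right_eq]
    exact (Nat.add_one_mul_choose_eq m k).symm

private def gz (n k : ℕ) : ℤ :=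
  ∑ i ∈ range (2*k+1), (-1)^i * ((2*k).choose i : ℤ) * ((i:ℤ) - k)^(2*n)

private lemma gz_step (n k : ℕ) (i : ℕ) (hi : i ≤ 2*k) :
    ((-1:ℤ))^(i+1) * ((2*k+2).choose (i+1) : ℤ) *
      (((i:ℤ)+1) - ((k:ℤ)+1))^(2*n) * ((i:ℤ)+1) * (((i:ℤ)+1) - (2*(k:ℤ)+2))
      = 2*((k:ℤ)+1)*(2*(k:ℤ)+1) * ((-1)^i * ((2*k).choose i : ℤ) * ((i:ℤ) - k)^(2*n)) := by
  have hA : (2*k+1+1) * (2*k+1).choose i = (2*k+2).choose (i+1) * (i+1) :=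
    Nat.add_one_mul_choose_eq (2*k+1) i
  have hB : (2*k+1 - i) * (2*k+1).choose i = (2*k+1) * (2*k).choose i := by
    simpa using sub_mul_choose' (2*k+1) i
  have hA' : ((2*k+2).choose (i+1) : ℤ) * ((i:ℤ)+1) = (2*(k:ℤ)+2) * ((2*k+1).choose i : ℤ) := by
    exact_mod_cast hA.symm
  have hB' : (2*(k:ℤ)+1 - i) * ((2*k+1).choose i : ℤ) = (2*(k:ℤ)+1) * ((2*k).choose i : ℤ) := by
    zify [show i ≤ 2*k+1 by omega] at hB
    convert hB using 2
  linear_combination ((-1:ℤ)^(i+1) * ((i:ℤ)-(k:ℤ))^(2*n) * ((i:ℤ)-2*k-1)) * hA' +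
    ((-1:ℤ)^i * ((i:ℤ)-(k:ℤ))^(2*n) * (2*(k:ℤ)+2)) * hB'

private lemma gz_rec (n k : ℕ) :
    gz (n+1) (k+1) = ((k:ℤ)+1)^2 * gz n (k+1) + 2*((k:ℤ)+1)*(2*(k:ℤ)+1) * gz n k := by
  have h2k : 2*(k+1) = 2*k+2 := by ring
  have step1 : gz (n+1) (k+1) = ((k:ℤ)+1)^2 * gz n (k+1) +
      ∑ i ∈ range (2*k+2+1), ((-1:ℤ))^i * ((2*k+2).choose i : ℤ) *
        ((i:ℤ)-((k:ℤ)+1))^(2*n) * i * ((i:ℤ) - (2*(k:ℤ)+2)) := by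
    unfold gz
    rw [h2k, mul_sum, ← sum_add_distrib]
    refine sum_congr rfl fun i _ => ?_
    push_cast
    ring
  rw [step1]
  congr 1
  rw [Finset.sum_range_succ' _ (2*k+2)]
  simp only [Nat.cast_zero, mul_zero, zero_mul, add_zero]
  rw [Finset.sum_range_succ]
  have hz : (-1:ℤ) ^ (2*k+1+1) * ((2*k+2).choose (2*k+1+1) : ℤ) *
      (((2*k+1+1 : ℕ):ℤ) - ((k:ℤ)+1))^(2*n) * ((2*k+1+1 : ℕ):ℤ) *
      (((2*k+1+1:ℕ):ℤ) - (2*(k:ℤ)+2)) = 0 := by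
    push_cast; ring
  rw [hz, add_zero, gz, mul_sum]
  refine sum_congr rfl fun i hi => ?_
  have hi' : i ≤ 2*k := Nat.lt_succ_iff.mp (mem_range.mp hi)
  have h := gz_step n k i hi'
  push_cast
  push_cast at h
  linear_combination h

private lemma gz_dvd : ∀ n k : ℕ, ((2:ℤ)^k * (k.factorial : ℤ)) ∣ gz n k := by
  intro n
  induction n with
  | zero =>
    intro k
    unfold gz
    simp only [mul_zero, pow_zero, mul_one]
    rw [Int.alternating_sum_range_choose]
    cases k with
    | zero => simp
    | succ k => simp
  | succ n ih =>
    intro k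
    cases k with
    | zero =>
      have h0 : gz (n+1) 0 = 0 := by
        unfold gz
        simp
      rw [h0]
      exact dvd_zero _
    | succ k =>
      have : ((k:ℤ)+1)^2 * gz n (k+1) + 2*((k:ℤ)+1)*(2*(k:ℤ)+1) * gz n k
          = gz (n+1) (k+1) := (gz_rec n k).symm
      rw [← this]
      refine dvd_add (Dvd.dvd.mul_left (ih (k+1)) _) ?_
      obtain ⟨m, hm⟩ := ih k
      refine ⟨(2*(k:ℤ)+1) * m, ?_⟩
      rw [hm]
      push_cast [Nat.factorial_succ]
      ring

private noncomputable abbrev sg (d : ℤ) (c : ℚ) : AddMonoidAlgebra ℚ ℤ :=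
  AddMonoidAlgebra.single d c

private noncomputable def vv : AddMonoidAlgebra ℚ ℤ := 1 + sg 1 (-1/2) + sg (-1) (-1/2)

private noncomputable def Lf (n : ℕ) : AddMonoidAlgebra ℚ ℤ →ₗ[ℚ] ℚ :=
  Finsupp.lsum ℚ (fun d : ℤ => LinearMap.toSpanSingleton ℚ ℚ ((d : ℚ)^(2*n))) ∘ₗ
    (AddMonoidAlgebra.coeffLinearEquiv ℚ).toLinearMap

private lemma Lf_single (n : ℕ) (d : ℤ) (c : ℚ) :
    Lf n (sg d c) = c * (d:ℚ)^(2*n) := by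
  rw [Lf, LinearMap.comp_apply]
  erw [Finsupp.lsum_single]
  rw [LinearMap.toSpanSingleton_apply, smul_eq_mul]

private lemma expandA (k : ℕ) : vv ^ k
    = ∑ r ∈ range (k+1), ∑ j ∈ range (k - r + 1),
        sg ((r:ℤ) - j) ((-1/2)^r * (-1/2)^j * ((k-r).choose j) * (k.choose r)) := by
  have : vv = sg 1 (-1/2) + (sg (-1) (-1/2) + 1) := by rw [vv]; ring
  rw [this, add_pow]
  refine sum_congr rfl fun r hr => ?_
  rw [add_pow, mul_sum, sum_mul]
  refine sum_congr rfl fun j hj => ?_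
  have hc : ((k.choose r : ℕ) : AddMonoidAlgebra ℚ ℤ) = sg 0 (k.choose r : ℚ) := rfl
  have hc2 : (((k-r).choose j : ℕ) : AddMonoidAlgebra ℚ ℤ) = sg 0 ((k-r).choose j : ℚ) := rfl
  rw [one_pow, mul_one, AddMonoidAlgebra.single_pow, AddMonoidAlgebra.single_pow, hc, hc2,
    AddMonoidAlgebra.single_mul_single, AddMonoidAlgebra.single_mul_single,
    AddMonoidAlgebra.single_mul_single]
  congr 1
  · push_cast [nsmul_eq_mul]; ring
  · ring

private lemma expandB (k : ℕ) : vv ^ k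
    = ∑ i ∈ range (2*k+1),
        sg ((i:ℤ) - k) ((-1/2)^k * (-1)^(2*k-i) * ((2*k).choose i)) := by
  have hv : vv = sg (-1) (-1/2) * (sg 1 1 - 1)^2 := by
    have h1 : sg (-1 : ℤ) (-1/2 : ℚ) * sg 1 1 = sg 0 (-1/2 : ℚ) := by
      rw [AddMonoidAlgebra.single_mul_single]; norm_num
    have h2 : sg (-1 : ℤ) (-1/2 : ℚ) * (sg 1 1 * sg 1 1) = sg 1 (-1/2 : ℚ) := by
      rw [AddMonoidAlgebra.single_mul_single, AddMonoidAlgebra.single_mul_single]; norm_num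
    have h4 : sg (0:ℤ) (-1/2:ℚ) + sg (0:ℤ) (-1/2:ℚ) = -1 := by
      rw [← AddMonoidAlgebra.single_add, AddMonoidAlgebra.one_def, ← AddMonoidAlgebra.single_neg]
      norm_num
    rw [vv]; linear_combination -h2 + 2*h1 + h4
  have hneg : (-1 : AddMonoidAlgebra ℚ ℤ) = sg 0 (-1) := by
    rw [AddMonoidAlgebra.one_def, ← AddMonoidAlgebra.single_neg]
  rw [hv, mul_pow, ← pow_mul, show (sg 1 (1:ℚ) - 1) = sg 1 1 + (-1) by ring,
    add_pow, AddMonoidAlgebra.single_pow, mul_sum]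
  refine sum_congr rfl fun i hi => ?_
  have hc : (((2*k).choose i : ℕ) : AddMonoidAlgebra ℚ ℤ) = sg 0 ((2*k).choose i : ℚ) := rfl
  rw [hneg, AddMonoidAlgebra.single_pow, AddMonoidAlgebra.single_pow, hc,
    AddMonoidAlgebra.single_mul_single, AddMonoidAlgebra.single_mul_single,
    AddMonoidAlgebra.single_mul_single]
  congr 1
  · push_cast [nsmul_eq_mul]; ring
  · ring

private lemma LA (n k : ℕ) : Lf n (vv ^ k)
    = ∑ r ∈ range (k+1), ∑ j ∈ range (k - r + 1),
        (-1/2:ℚ)^r * (-1/2:ℚ)^j * ((k-r).choose j : ℚ) * (k.choose r : ℚ) *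
          ((r:ℚ) - j)^(2*n) := by
  rw [expandA, map_sum]
  refine sum_congr rfl fun r _ => ?_
  rw [map_sum]
  refine sum_congr rfl fun j _ => ?_
  rw [Lf_single]
  push_cast
  ring

private lemma LB (n k : ℕ) : Lf n (vv ^ k) = (-1/2:ℚ)^k * (gz n k : ℚ) := by
  rw [expandB, map_sum, gz]
  push_cast
  rw [mul_sum]
  refine sum_congr rfl fun i hi => ?_
  rw [Lf_single]
  have hne : ((-1:ℚ))^i ≠ 0 := pow_ne_zero _ (by norm_num)
  have h1 : ((-1:ℚ))^(2*k-i) * (-1)^i = 1 := by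
    rw [← pow_add, show 2*k-i+i = 2*k from by
      have := Nat.lt_succ_iff.mp (mem_range.mp hi); omega, pow_mul]
    norm_num
  have h2 : ((-1:ℚ))^i * (-1)^i = 1 := by
    rw [← pow_add, ← two_mul, pow_mul]
    norm_num
  have hp : ((-1:ℚ))^(2*k-i) = (-1)^i := mul_right_cancel₀ hne (h1.trans h2.symm)
  rw [hp]
  push_cast
  ring

theorem coeff_isInt (n : ℕ) (hn : 0 < n) :
    ∀ k, 1 ≤ k → k ≤ n → ∃ m : ℤ,
      (1 / (Nat.factorial k) : ℚ) *
        ∑ r ∈ Finset.range (k + 1), ((-1) ^ r / 2 ^ r) * (Nat.choose k r : ℚ) *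
          ∑ j ∈ Finset.range (k - r + 1), ((-1) ^ j / 2 ^ j) * (Nat.choose (k - r) j : ℚ) *
            ((r : ℚ) - j) ^ (2 * n) = (m : ℚ) := by
  intro k _ _
  obtain ⟨m, hm⟩ := gz_dvd n k
  refine ⟨(-1)^k * m, ?_⟩
  have hS : ∑ r ∈ Finset.range (k + 1), ((-1:ℚ) ^ r / 2 ^ r) * (Nat.choose k r : ℚ) *
      ∑ j ∈ Finset.range (k - r + 1), ((-1:ℚ) ^ j / 2 ^ j) * (Nat.choose (k - r) j : ℚ) *
        ((r : ℚ) - j) ^ (2 * n) = (-1/2:ℚ)^k * (gz n k : ℚ) := by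
    rw [← LB n k, LA n k]
    refine sum_congr rfl fun r _ => ?_
    rw [mul_sum]
    refine sum_congr rfl fun j _ => ?_
    rw [div_pow, div_pow]
    ring
  rw [hS, hm]
  have hf : ((k.factorial : ℚ)) ≠ 0 := Nat.cast_ne_zero.mpr (Nat.factorial_ne_zero k)
  have h2 : ((2:ℚ))^k ≠ 0 := pow_ne_zero _ (by norm_num)
  push_cast
  field_simp
  have h3 : ((-1/2:ℚ))^k * 2^k = (-1)^k := by rw [← mul_pow]; norm_num
  linear_combination (m:ℚ) * h3
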